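/- arXiv:2301.05450 — 2 statements merged into one kernel-verified Lean document; each statement's English description precedes it below -/
import Mathlib

section
/- Let φ be a Schwartz function on ℝ with supp φ̂ ⊂ (−1,1), φ̂ ≥ 0 on (−1,1), and φ̂ ≥ 1 on (−1/2,1/2). For h ∈ (0,1/2) let φ_h(y) = h^{−1/2} φ(y/h). Then there exists ε₀ > 0 and c > 0 (depending only on φ) such that for all |τ| ≤ ε₀ h² and |y| ≤ ε₀ h, |e^{iτΔ_ℝ} φ_h(y)| ≥ c h^{−1/2}. -/
open Real MeasureTheory

noncomputable section

/-- Pointwise lower bound for the free Schrödinger evolution of the wave packet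
`φ_h(y) = h^{−1/2} φ(y/h)`, where `φ` is the Schwartz function with Fourier
transform `ψ = φ̂` (so `φ̂_h(ξ) = h^{1/2} ψ(hξ)` and
`e^{iτΔ_ℝ}φ_h(y) = ∫ h^{1/2} ψ(hξ) e^{i(yξ − τξ²)} dξ`): there are `ε₀, c > 0`
such that `|e^{iτΔ_ℝ}φ_h(y)| ≥ c h^{−1/2}` for `|τ| ≤ ε₀h²`, `|y| ≤ ε₀h`. -/
theorem stmt10 (ψ : SchwartzMap ℝ ℝ)
    (hsupp : ∀ ξ : ℝ, ψ ξ ≠ 0 → |ξ| < 1)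
    (hnn : ∀ ξ : ℝ, 0 ≤ ψ ξ)
    (hone : ∀ ξ : ℝ, |ξ| < 1 / 2 → 1 ≤ ψ ξ) :
    ∃ ε₀ : ℝ, 0 < ε₀ ∧ ∃ c : ℝ, 0 < c ∧
      ∀ h : ℝ, 0 < h → h < 1 / 2 → ∀ τ y : ℝ, |τ| ≤ ε₀ * h ^ 2 → |y| ≤ ε₀ * h →
        c / Real.sqrt h ≤
          ‖∫ ξ : ℝ, ((Real.sqrt h * ψ (h * ξ) : ℝ) : ℂ) *
              Complex.exp (Complex.I * ((y * ξ - τ * ξ ^ 2 : ℝ) : ℂ))‖ := by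
  have hπ := Real.pi_gt_three
  have hcos : 0 < Real.cos 1 := Real.cos_pos_of_mem_Ioo ⟨by linarith, by linarith⟩
  refine ⟨1/2, by norm_num, Real.cos 1, hcos, ?_⟩
  intro h hh0 hh τ y hτ hy
  have hs0 : 0 < Real.sqrt h := Real.sqrt_pos.2 hh0
  -- integrability of ξ ↦ ψ (h ξ)
  have hψint : Integrable (fun ξ : ℝ => ψ (h * ξ)) := ψ.integrable.comp_mul_left' hh0.ne'
  have hψint' : Integrable (fun ξ : ℝ => Real.sqrt h * ψ (h * ξ)) := hψint.const_mul _
  set F : ℝ → ℂ := fun ξ => ((Real.sqrt h * ψ (h * ξ) : ℝ) : ℂ) *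
      Complex.exp (Complex.I * ((y * ξ - τ * ξ ^ 2 : ℝ) : ℂ)) with hF
  have hFnorm : ∀ ξ, ‖F ξ‖ = Real.sqrt h * ψ (h * ξ) := by
    intro ξ
    rw [hF]
    have h1 : ‖Complex.exp (Complex.I * ((y * ξ - τ * ξ ^ 2 : ℝ) : ℂ))‖ = 1 := by
      rw [Complex.norm_exp, Complex.mul_re, Complex.I_re, Complex.I_im,
        Complex.ofReal_re, Complex.ofReal_im]
      norm_num
    rw [norm_mul, h1, mul_one, Complex.norm_real, Real.norm_eq_abs,
      abs_of_nonneg (mul_nonneg hs0.le (hnn _))]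
  have hFcont : Continuous F := by
    apply Continuous.mul
    · exact Complex.continuous_ofReal.comp (continuous_const.mul (ψ.continuous.comp (continuous_const.mul continuous_id)))
    · exact Complex.continuous_exp.comp (continuous_const.mul (Complex.continuous_ofReal.comp (by continuity)))
  have hFint : Integrable F := by
    refine (hψint'.mono' hFcont.aestronglyMeasurable ?_)
    filter_upwards with ξ using le_of_eq (hFnorm ξ)
  -- real part computation
  have hre : ∀ ξ : ℝ, (F ξ).re = Real.sqrt h * ψ (h * ξ) * Real.cos (y * ξ - τ * ξ ^ 2) := by
    intro ξ
    rw [hF]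
    simp only
    rw [mul_comm Complex.I, Complex.mul_re, Complex.ofReal_re, Complex.ofReal_im, zero_mul,
      sub_zero, Complex.exp_ofReal_mul_I_re]
  -- pointwise lower bound on the real part
  have hpt : ∀ ξ : ℝ, Real.cos 1 * (Real.sqrt h * ψ (h * ξ)) ≤ (F ξ).re := by
    intro ξ
    rw [hre ξ]
    by_cases hz : ψ (h * ξ) = 0
    · simp [hz]
    · have hξ : |h * ξ| < 1 := hsupp _ hz
      have hξ' : |ξ| < 1 / h := by
        rw [abs_mul, abs_of_pos hh0] at hξ
        rw [lt_div_iff₀ hh0]; linarith [hξ]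
      have hphase : |y * ξ - τ * ξ ^ 2| ≤ 1 := by
        have h1 : |y * ξ| ≤ 1/2 := by
          rw [abs_mul]
          calc |y| * |ξ| ≤ (1/2 * h) * (1/h) :=
                mul_le_mul hy hξ'.le (abs_nonneg _) (by positivity)
            _ = 1/2 := by field_simp
        have h2 : |τ * ξ ^ 2| ≤ 1/2 := by
          rw [abs_mul, abs_pow]
          calc |τ| * |ξ| ^ 2 ≤ (1/2 * h ^ 2) * (1/h) ^ 2 := by
                apply mul_le_mul hτ (by apply pow_le_pow_left₀ (abs_nonneg _) hξ'.le) (by positivity) (by positivity)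
            _ = 1/2 := by field_simp
        calc |y * ξ - τ * ξ ^ 2| ≤ |y * ξ| + |τ * ξ ^ 2| := abs_sub _ _
          _ ≤ 1 := by linarith
      have hc : Real.cos 1 ≤ Real.cos (y * ξ - τ * ξ ^ 2) := by
        rw [← Real.cos_abs (y * ξ - τ * ξ ^ 2)]
        exact Real.cos_le_cos_of_nonneg_of_le_pi (abs_nonneg _) (by linarith) hphase
      have hnn' : 0 ≤ Real.sqrt h * ψ (h * ξ) := mul_nonneg hs0.le (hnn _)
      calc Real.cos 1 * (Real.sqrt h * ψ (h * ξ))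
          ≤ Real.cos (y * ξ - τ * ξ ^ 2) * (Real.sqrt h * ψ (h * ξ)) :=
            mul_le_mul_of_nonneg_right hc hnn'
        _ = Real.sqrt h * ψ (h * ξ) * Real.cos (y * ξ - τ * ξ ^ 2) := by ring
  -- ∫ ψ ≥ 1
  have hψ1 : (1 : ℝ) ≤ ∫ ξ : ℝ, ψ ξ := by
    have hIoo : (1 : ℝ) ≤ ∫ ξ in Set.Ioo (-(1/2) : ℝ) (1/2), ψ ξ := by
      have hvol : (volume (Set.Ioo (-(1/2) : ℝ) (1/2))).toReal = 1 := by
        simp [Real.volume_Ioo]; norm_num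
      have hconst : ∫ ξ in Set.Ioo (-(1/2) : ℝ) (1/2), (1 : ℝ) = 1 := by
        rw [setIntegral_const, smul_eq_mul, measureReal_def, hvol, one_mul]
      calc (1 : ℝ) = ∫ ξ in Set.Ioo (-(1/2) : ℝ) (1/2), (1 : ℝ) := hconst.symm
        _ ≤ ∫ ξ in Set.Ioo (-(1/2) : ℝ) (1/2), ψ ξ := by
            apply setIntegral_mono_on (integrableOn_const (by simp [Real.volume_Ioo]))
              (ψ.integrable.integrableOn) measurableSet_Ioo
            intro ξ hξ
            exact hone ξ (abs_lt.2 ⟨by linarith [hξ.1], by linarith [hξ.2]⟩)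
    refine hIoo.trans (setIntegral_le_integral ψ.integrable ?_)
    filter_upwards with ξ using hnn ξ
  -- compute ∫ ψ(hξ) = h⁻¹ ∫ ψ
  have hscale : (∫ ξ : ℝ, ψ (h * ξ)) = h⁻¹ * ∫ ξ : ℝ, ψ ξ := by
    rw [MeasureTheory.Measure.integral_comp_mul_left (fun x => ψ x) h]
    rw [smul_eq_mul, abs_of_pos (inv_pos.2 hh0)]
  -- put it together
  have key : Real.cos 1 / Real.sqrt h ≤ ∫ ξ, (F ξ).re := by
    have hint1 : Integrable (fun ξ : ℝ => Real.cos 1 * (Real.sqrt h * ψ (h * ξ))) :=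
      hψint'.const_mul _
    have hint2 : Integrable (fun ξ => (F ξ).re) := hFint.re
    have := integral_mono hint1 hint2 hpt
    calc Real.cos 1 / Real.sqrt h
        = Real.cos 1 * (Real.sqrt h * (h⁻¹ * 1)) := by
          rw [mul_one]
          rw [div_eq_mul_inv]
          congr 1
          rw [← Real.sqrt_inv]
          rw [eq_comm]
          nth_rewrite 1 [show h⁻¹ = Real.sqrt h⁻¹ * Real.sqrt h⁻¹ from
            (Real.mul_self_sqrt (inv_nonneg.2 hh0.le)).symm]
          rw [mul_comm (Real.sqrt h) _, mul_assoc]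
          rw [← Real.sqrt_mul (inv_nonneg.2 hh0.le), inv_mul_cancel₀ hh0.ne', Real.sqrt_one, mul_one]
      _ ≤ Real.cos 1 * (Real.sqrt h * (h⁻¹ * ∫ ξ : ℝ, ψ ξ)) := by
          apply mul_le_mul_of_nonneg_left _ hcos.le
          apply mul_le_mul_of_nonneg_left _ hs0.le
          apply mul_le_mul_of_nonneg_left hψ1 (inv_nonneg.2 hh0.le)
      _ = ∫ ξ : ℝ, Real.cos 1 * (Real.sqrt h * ψ (h * ξ)) := by
          rw [integral_const_mul, integral_const_mul, hscale]
      _ ≤ ∫ ξ, (F ξ).re := this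
  have hre_int : ∫ ξ, (F ξ).re = (∫ ξ, F ξ).re := integral_re hFint
  calc Real.cos 1 / Real.sqrt h ≤ (∫ ξ, F ξ).re := by rw [← hre_int]; exact key
    _ ≤ ‖∫ ξ, F ξ‖ := Complex.re_le_norm _

end
end

section
/- Let g be a 2π-periodic function given by a trigonometric polynomial-type series g(x) = h^{1/2} ∑_{k∈ℤ} ψ(hk) e^{ikx}, where ψ is a nonnegative Schwartz function on ℝ with ψ ≥ 1 on (−1/2, 1/2) and supp ψ ⊂ (−1,1), and h ∈ (0,1/2). Then there exist ε₀, c > 0 such that, for the torus Schrödinger flow e^{iτΔ_𝕋} (multiplying the k-th coefficient by e^{−iτk²}), one has |e^{iτΔ_𝕋} g(x)| ≥ c h^{−1/2} for all |τ| ≤ ε₀ h² and |x| ≤ ε₀ h (x identified with a point of 𝕋 near 0). -/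
open Real

noncomputable section

/-- Pointwise lower bound for the torus Schrödinger evolution of the periodic
wave packet `g(x) = h^{1/2} ∑_{k∈ℤ} ψ(hk) e^{ikx}` (so
`e^{iτΔ_𝕋}g(x) = ∑_k h^{1/2} ψ(hk) e^{i(xk − τk²)}`): there are `ε₀, c > 0`
such that `|e^{iτΔ_𝕋}g(x)| ≥ c h^{−1/2}` for `|τ| ≤ ε₀h²` and `|x| ≤ ε₀h`. -/
theorem stmt11 (ψ : SchwartzMap ℝ ℝ)
    (hsupp : ∀ ξ : ℝ, ψ ξ ≠ 0 → |ξ| < 1)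
    (hnn : ∀ ξ : ℝ, 0 ≤ ψ ξ)
    (hone : ∀ ξ : ℝ, |ξ| < 1 / 2 → 1 ≤ ψ ξ) :
    ∃ ε₀ : ℝ, 0 < ε₀ ∧ ∃ c : ℝ, 0 < c ∧
      ∀ h : ℝ, 0 < h → h < 1 / 2 → ∀ τ x : ℝ, |τ| ≤ ε₀ * h ^ 2 → |x| ≤ ε₀ * h →
        c / Real.sqrt h ≤
          ‖∑' k : ℤ, ((Real.sqrt h * ψ (h * k) : ℝ) : ℂ) *
              Complex.exp (Complex.I * ((x * k - τ * k ^ 2 : ℝ) : ℂ))‖ := by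
  refine ⟨1/4, by norm_num, 1/4, by norm_num, ?_⟩
  intro h hh hh2 τ x hτ hx
  have hsq : (0:ℝ) < Real.sqrt h := Real.sqrt_pos.mpr hh
  set f : ℤ → ℂ := fun k => ((Real.sqrt h * ψ (h * k) : ℝ) : ℂ) *
      Complex.exp (Complex.I * ((x * k - τ * k ^ 2 : ℝ) : ℂ)) with hfdef
  -- phase bound
  have key : ∀ k : ℤ, |(k:ℝ)| ≤ 1/h → |x * k - τ * k^2| ≤ 1/2 := by
    intro k hk
    have h1 : |x * k| ≤ 1/4 := by
      rw [abs_mul]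
      calc |x| * |(k:ℝ)| ≤ (1/4 * h) * (1/h) := by
            exact mul_le_mul hx hk (abs_nonneg _) (by positivity)
        _ = 1/4 := by field_simp
    have h2 : |τ * (k:ℝ)^2| ≤ 1/4 := by
      rw [abs_mul]
      have hk2 : |(k:ℝ)^2| ≤ (1/h)^2 := by
        rw [abs_pow]
        exact pow_le_pow_left₀ (abs_nonneg _) hk 2
      calc |τ| * |(k:ℝ)^2| ≤ (1/4 * h^2) * (1/h)^2 := by
            exact mul_le_mul hτ hk2 (abs_nonneg _) (by positivity)
        _ = 1/4 := by field_simp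
    calc |x * k - τ * k^2| ≤ |x * k| + |τ * (k:ℝ)^2| := abs_sub _ _
      _ ≤ 1/2 := by linarith
  -- cos bound
  have hcos : ∀ t : ℝ, |t| ≤ 1/2 → (1:ℝ)/2 ≤ Real.cos t := by
    intro t ht
    have := Real.one_sub_sq_div_two_le_cos (x := t)
    have ht2 : t^2 ≤ (1/2)^2 := by
      rw [← sq_abs]; exact pow_le_pow_left₀ (abs_nonneg _) ht 2
    nlinarith
  -- real part of each term
  have hre : ∀ k : ℤ, (f k).re = (Real.sqrt h * ψ (h * k)) * Real.cos (x * k - τ * k^2) := by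
    intro k
    rw [hfdef]
    show (((Real.sqrt h * ψ (h * k) : ℝ) : ℂ) * Complex.exp (Complex.I * ((x * k - τ * k ^ 2 : ℝ) : ℂ))).re = _
    rw [mul_comm Complex.I, Complex.re_ofReal_mul, Complex.exp_ofReal_mul_I_re]
  -- finite support
  set N : ℤ := ⌈1/h⌉ with hN
  have hNr : (1:ℝ)/h ≤ (N:ℝ) := Int.le_ceil _
  have hzero : ∀ k : ℤ, k ∉ Finset.Icc (-N) N → f k = 0 := by
    intro k hk
    rw [Finset.mem_Icc, not_and_or, not_le, not_le] at hk
    have hkabs : (N:ℝ) < |(k:ℝ)| := by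
      have : N < |k| := lt_abs.mpr (by omega)
      calc (N:ℝ) < ((|k| : ℤ) : ℝ) := by exact_mod_cast this
        _ = |(k:ℝ)| := by push_cast; rfl
    have hψ : ψ (h * k) = 0 := by
      by_contra hne
      have h5 := hsupp (h * k) hne
      rw [abs_mul, abs_of_pos hh] at h5
      have h3 : (1:ℝ)/h < |(k:ℝ)| := lt_of_le_of_lt hNr hkabs
      rw [div_lt_iff₀ hh] at h3
      nlinarith
    simp [hfdef, hψ]
  have htsum : ∑' k : ℤ, f k = ∑ k ∈ Finset.Icc (-N) N, f k := tsum_eq_sum hzero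
  -- nonnegativity of real parts on the support set
  have hnonneg : ∀ k ∈ Finset.Icc (-N) N, (0:ℝ) ≤ (f k).re := by
    intro k _
    rw [hre]
    rcases eq_or_ne (ψ (h * k)) 0 with h0 | h0
    · simp [h0]
    · have h5 := hsupp (h * k) h0
      rw [abs_mul, abs_of_pos hh] at h5
      have hk1 : |(k:ℝ)| ≤ 1/h := by
        rw [le_div_iff₀ hh]; nlinarith
      have := hcos _ (key k hk1)
      have := hnn (h * k)
      positivity
  -- the good set
  set M : ℤ := ⌈1/(2*h)⌉ - 1 with hM
  have hMr : ((M:ℝ) + 1) * (2*h) ≥ 1 := by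
    have : 1/(2*h) ≤ ((M:ℝ) + 1) := by
      rw [hM]; push_cast; linarith [Int.le_ceil (1/(2*h))]
    have h2h : (0:ℝ) < 2*h := by linarith
    calc ((M:ℝ)+1) * (2*h) ≥ (1/(2*h)) * (2*h) := by
          exact mul_le_mul_of_nonneg_right this h2h.le
      _ = 1 := by field_simp
  have hMlt : (M:ℝ) < 1/(2*h) := by
    rw [hM]; push_cast
    linarith [Int.ceil_lt_add_one (1/(2*h))]
  have hM0 : 0 ≤ M := by
    have h1 : (1:ℝ) < 1/(2*h) := by
      rw [lt_div_iff₀ (by linarith)]; linarith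
    have : (1:ℤ) ≤ ⌈1/(2*h)⌉ := by
      exact_mod_cast le_trans h1.le (Int.le_ceil _)
    omega
  have hsub : Finset.Icc (0:ℤ) M ⊆ Finset.Icc (-N) N := by
    intro k hk
    rw [Finset.mem_Icc] at hk ⊢
    have hkr : (k:ℝ) ≤ M := by exact_mod_cast hk.2
    have : (k:ℝ) < (N:ℝ) := by
      calc (k:ℝ) ≤ M := hkr
        _ < 1/(2*h) := hMlt
        _ ≤ 1/h := by
            apply div_le_div_of_nonneg_left (by norm_num) hh; linarith
        _ ≤ N := hNr
    have hkN : k < N := by exact_mod_cast this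
    constructor <;> omega
  -- lower bound each term on the good set
  have hterm : ∀ k ∈ Finset.Icc (0:ℤ) M, Real.sqrt h * (1/2) ≤ (f k).re := by
    intro k hk
    rw [Finset.mem_Icc] at hk
    have hk0 : (0:ℝ) ≤ (k:ℝ) := by exact_mod_cast hk.1
    have hkM : (k:ℝ) ≤ M := by exact_mod_cast hk.2
    have hkhalf : |h * (k:ℝ)| < 1/2 := by
      rw [abs_of_nonneg (by positivity)]
      calc h * (k:ℝ) ≤ h * M := by nlinarith
        _ < h * (1/(2*h)) := by
            apply mul_lt_mul_of_pos_left hMlt hh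
        _ = 1/2 := by field_simp
    have hψ1 : 1 ≤ ψ (h * k) := hone _ hkhalf
    have hk1 : |(k:ℝ)| ≤ 1/h := by
      rw [abs_of_nonneg hk0, le_div_iff₀ hh]
      rw [abs_of_nonneg (by positivity)] at hkhalf
      nlinarith
    have hc := hcos _ (key k hk1)
    rw [hre]
    have : Real.sqrt h * 1 ≤ Real.sqrt h * ψ (h * k) :=
      mul_le_mul_of_nonneg_left hψ1 hsq.le
    nlinarith
  -- put it together
  have hcard : ((Finset.Icc (0:ℤ) M).card : ℝ) = (M:ℝ) + 1 := by
    rw [Int.card_Icc]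
    have : (M + 1 - 0).toNat = (M + 1 : ℤ).toNat := by ring_nf
    rw [this]
    have h2 : (((M+1).toNat : ℤ)) = M + 1 := Int.toNat_of_nonneg (by omega)
    exact_mod_cast h2
  have hsum : (1:ℝ)/4 / Real.sqrt h ≤ ∑ k ∈ Finset.Icc (-N) N, (f k).re := by
    have s1 : ∑ k ∈ Finset.Icc (0:ℤ) M, (f k).re ≤ ∑ k ∈ Finset.Icc (-N) N, (f k).re :=
      Finset.sum_le_sum_of_subset_of_nonneg hsub (fun k hk _ => hnonneg k hk)
    have s2 : ((Finset.Icc (0:ℤ) M).card : ℝ) * (Real.sqrt h * (1/2)) ≤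
        ∑ k ∈ Finset.Icc (0:ℤ) M, (f k).re := by
      exact Finset.card_nsmul_le_sum _ _ _ hterm |>.trans_eq' (by simp [nsmul_eq_mul])
    rw [hcard] at s2
    have s3 : (1:ℝ)/4 / Real.sqrt h ≤ ((M:ℝ) + 1) * (Real.sqrt h * (1/2)) := by
      have hhs : Real.sqrt h * Real.sqrt h = h := Real.mul_self_sqrt hh.le
      rw [div_le_iff₀ hsq]
      nlinarith
    linarith
  have hre_sum : (∑ k ∈ Finset.Icc (-N) N, f k).re = ∑ k ∈ Finset.Icc (-N) N, (f k).re :=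
    Complex.re_sum _ _
  calc (1:ℝ)/4 / Real.sqrt h ≤ ∑ k ∈ Finset.Icc (-N) N, (f k).re := hsum
    _ = (∑ k ∈ Finset.Icc (-N) N, f k).re := hre_sum.symm
    _ ≤ ‖∑ k ∈ Finset.Icc (-N) N, f k‖ := Complex.re_le_norm _
    _ = ‖∑' k : ℤ, f k‖ := by rw [htsum]

end
end
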